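/- Fix 1 ≤ K ≤ M, 1 ≤ T ≤ 2M and 1 ≤ τ ≤ T, and let Θ'_{n,K,T,τ} = {θ ∈ Θ'_{n,K} : T(θ) = T and τ_n(θ) = τ}. Then almost surely, limsup_{n→∞} sup_{θ ∈ Θ'_{n,K,T,τ}} [ Σ_{t=τ+1}^{T} (1/n)·R_n(J_t(θ))·log H(J_t(θ)) − 3·Σ_{t=τ+1}^{T} (2/n)·log H(J_t(θ)) ] ≤ 0. -/

import Mathlib

open MeasureTheory ProbabilityTheory Filter Set
open scoped Classical
open scoped ENNReal

/-- The uniform density with center `a` and half-width `b`, supported on `[a - b, a + b)`. -/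
noncomputable def unifPdf (a b x : ℝ) : ℝ :=
  if a - b ≤ x ∧ x < a + b then 1 / (2 * b) else 0

/-- Mixture of `M` uniform densities; `θ (m, 0)` is `α_m`, `θ (m, 1)` is `a_m`,
`θ (m, 2)` is `b_m`. -/
noncomputable def mixPdf (M : ℕ) (θ : EuclideanSpace ℝ (Fin M × Fin 3)) (x : ℝ) : ℝ :=
  ∑ m : Fin M, θ (m, 0) * unifPdf (θ (m, 1)) (θ (m, 2)) x

/-- The parameter space `Θ`. -/
def mixParams (M : ℕ) : Set (EuclideanSpace ℝ (Fin M × Fin 3)) :=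
  {θ | (∀ m, 0 ≤ θ (m, 0)) ∧ (∑ m : Fin M, θ (m, 0)) = 1 ∧ ∀ m, 0 < θ (m, 2)}

/-- `Θ_n' = {θ ∈ Θ : L_min ≤ a_m ≤ L_max, c_n ≤ b_m ≤ L for all m, b_m ≤ c₀ for some m}`. -/
def thetaN' (M : ℕ) (Lmin Lmax L c₀ cn : ℝ) : Set (EuclideanSpace ℝ (Fin M × Fin 3)) :=
  {θ ∈ mixParams M |
    (∀ m : Fin M, Lmin ≤ θ (m, 1) ∧ θ (m, 1) ≤ Lmax ∧ cn ≤ θ (m, 2) ∧ θ (m, 2) ≤ L) ∧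
    ∃ m : Fin M, θ (m, 2) ≤ c₀}

/-- `Θ'_{n,K} = {θ ∈ Θ_n' : b_1 ≤ … ≤ b_K ≤ c₀ < b_{K+1} ≤ … ≤ b_M}`. -/
def thetaNK (M : ℕ) (Lmin Lmax L c₀ cn : ℝ) (K : ℕ) :
    Set (EuclideanSpace ℝ (Fin M × Fin 3)) :=
  {θ ∈ thetaN' M Lmin Lmax L c₀ cn |
    (Monotone fun m : Fin M => θ (m, 2)) ∧
    ∀ m : Fin M, ((m : ℕ) < K → θ (m, 2) ≤ c₀) ∧ (K ≤ (m : ℕ) → c₀ < θ (m, 2))}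

/-- `R_n(V)`: the number of the first `n` observations lying in `V`. -/
noncomputable def countIn {Ω : Type*} (X : ℕ → Ω → ℝ) (ω : Ω) (n : ℕ) (V : Set ℝ) : ℕ :=
  ((Finset.range n).filter fun i => X i ω ∈ V).card

/-- A decomposition of the mixture density `f(·; θ)` as a step function
`f(x; θ) = Σ_{t=1}^T H(J_t(θ))·1_{J_t(θ)}(x)` with disjoint nonempty half-open
intervals `J_t = [l_t, r_t)` and nondecreasing positive heights `H_t`. -/
structure StepDecomp (M : ℕ) (θ : EuclideanSpace ℝ (Fin M × Fin 3)) (T : ℕ) where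
  l : Fin T → ℝ
  r : Fin T → ℝ
  H : Fin T → ℝ
  lt : ∀ t, l t < r t
  disj : ∀ t t', t ≠ t' → Disjoint (Set.Ico (l t) (r t)) (Set.Ico (l t') (r t'))
  Hpos : ∀ t, 0 < H t
  Hmono : Monotone H
  repr : ∀ x : ℝ, mixPdf M θ x
    = ∑ t : Fin T, H t * (Set.Ico (l t) (r t)).indicator 1 x

/-- `τ_n(θ) = τ`: the heights `H_t` are at most `M/(2c_n')` precisely for `t ≤ τ`
(in the one-based indexing of the paper, i.e. `t.val < τ` with zero-based `Fin`). -/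
def tauEq {M T : ℕ} {θ : EuclideanSpace ℝ (Fin M × Fin 3)}
    (D : StepDecomp M θ T) (cn' : ℝ) (τ : ℕ) : Prop :=
  ∀ t : Fin T, D.H t ≤ (M : ℝ) / (2 * cn') ↔ (t : ℕ) < τ

lemma unifPdf_eq_indicator (a b : ℝ) (x : ℝ) :
    unifPdf a b x = (Set.Ico (a-b) (a+b)).indicator (fun _ => 1/(2*b)) x := by
  simp [unifPdf, Set.indicator, Set.mem_Ico]

lemma measurable_unifPdf (a b : ℝ) : Measurable (unifPdf a b) := by
  unfold unifPdf
  exact Measurable.ite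
    (show MeasurableSet (Set.Ico (a-b) (a+b)) from measurableSet_Ico)
    measurable_const measurable_const

lemma unifPdf_nonneg {a b : ℝ} (hb : 0 < b) (x : ℝ) : 0 ≤ unifPdf a b x := by
  unfold unifPdf; split <;> positivity

lemma mixPdf_nonneg {M : ℕ} {θ : EuclideanSpace ℝ (Fin M × Fin 3)}
    (hθ : θ ∈ mixParams M) (x : ℝ) : 0 ≤ mixPdf M θ x := by
  obtain ⟨hα, -, hb⟩ := hθ
  exact Finset.sum_nonneg fun m _ => mul_nonneg (hα m) (unifPdf_nonneg (hb m) x)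

lemma lintegral_ofReal_mixPdf {M : ℕ} {θ : EuclideanSpace ℝ (Fin M × Fin 3)}
    (hθ : θ ∈ mixParams M) :
    ∫⁻ x, ENNReal.ofReal (mixPdf M θ x) = 1 := by
  obtain ⟨hα, hsum, hb⟩ := hθ
  have h1 : ∀ x, ENNReal.ofReal (mixPdf M θ x)
      = ∑ m : Fin M, ENNReal.ofReal (θ (m, 0) * unifPdf (θ (m, 1)) (θ (m, 2)) x) := by
    intro x
    exact ENNReal.ofReal_sum_of_nonneg fun m _ =>
      mul_nonneg (hα m) (unifPdf_nonneg (hb m) x)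
  simp only [h1]
  rw [lintegral_finset_sum]
  · have h2 : ∀ m : Fin M,
        (∫⁻ x, ENNReal.ofReal (θ (m, 0) * unifPdf (θ (m, 1)) (θ (m, 2)) x))
          = ENNReal.ofReal (θ (m, 0)) := by
      intro m
      set a := θ (m, 1); set b := θ (m, 2)
      have hbpos : 0 < b := hb m
      have h3 : ∀ x, ENNReal.ofReal (θ (m, 0) * unifPdf a b x)
          = (Set.Ico (a-b) (a+b)).indicator
              (fun _ => ENNReal.ofReal (θ (m, 0) * (1/(2*b)))) x := by
        intro x
        rw [unifPdf_eq_indicator]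
        by_cases hx : x ∈ Set.Ico (a-b) (a+b) <;>
          simp [Set.indicator_of_mem, Set.indicator_of_notMem, hx]
      simp only [h3]
      rw [lintegral_indicator_const measurableSet_Ico, Real.volume_Ico,
        ← ENNReal.ofReal_mul (mul_nonneg (hα m) (by positivity))]
      congr 1
      have : a + b - (a - b) = 2 * b := by ring
      rw [this]
      field_simp
    simp only [h2]
    rw [← ENNReal.ofReal_sum_of_nonneg fun m _ => hα m, hsum, ENNReal.ofReal_one]
  · intro m _
    exact ((measurable_unifPdf _ _).const_mul _).ennreal_ofReal

lemma StepDecomp.value_eq {M T : ℕ} {θ : EuclideanSpace ℝ (Fin M × Fin 3)}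
    (D : StepDecomp M θ T) (t : Fin T) {x : ℝ}
    (hx : x ∈ Set.Ico (D.l t) (D.r t)) : mixPdf M θ x = D.H t := by
  rw [D.repr x, Finset.sum_eq_single t]
  · simp [Set.indicator_of_mem hx]
  · intro t' _ hne
    have hx' : x ∉ Set.Ico (D.l t') (D.r t') := fun hx' =>
      Set.disjoint_left.mp (D.disj t' t hne) hx' hx
    simp [Set.indicator_of_notMem hx']
  · simp

lemma StepDecomp.height_mul_length_le_one {M T : ℕ} {θ : EuclideanSpace ℝ (Fin M × Fin 3)}
    (hθ : θ ∈ mixParams M) (D : StepDecomp M θ T) (t : Fin T) :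
    D.H t * (D.r t - D.l t) ≤ 1 := by
  have h0 : ENNReal.ofReal (D.H t) * volume (Set.Ico (D.l t) (D.r t)) ≤ 1 := by
    rw [← lintegral_ofReal_mixPdf hθ, ← lintegral_indicator_const measurableSet_Ico]
    refine lintegral_mono fun x => ?_
    by_cases hx : x ∈ Set.Ico (D.l t) (D.r t)
    · rw [Set.indicator_of_mem hx, D.value_eq t hx]
    · simp [Set.indicator_of_notMem hx]
  rw [Real.volume_Ico, ← ENNReal.ofReal_mul (D.Hpos t).le] at h0
  exact ENNReal.ofReal_le_one.mp h0

lemma mem_support_bounds {M : ℕ} {Lmin Lmax L c₀ cn : ℝ}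
    {θ : EuclideanSpace ℝ (Fin M × Fin 3)}
    (hθ : θ ∈ thetaN' M Lmin Lmax L c₀ cn) {x : ℝ}
    (hx : 0 < mixPdf M θ x) : Lmin - L ≤ x ∧ x < Lmax + L := by
  obtain ⟨⟨hα, hsum, hb⟩, hbnd, -⟩ := hθ
  have : ∃ m : Fin M, m ∈ Finset.univ ∧
      (0:ℝ) < θ (m, 0) * unifPdf (θ (m, 1)) (θ (m, 2)) x := by
    by_contra h
    push_neg at h
    have : mixPdf M θ x ≤ 0 := Finset.sum_nonpos fun m hm => h m hm
    linarith
  obtain ⟨m, -, hm⟩ := this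
  have hun : unifPdf (θ (m, 1)) (θ (m, 2)) x ≠ 0 := by
    intro h; rw [h, mul_zero] at hm; exact lt_irrefl 0 hm
  have hmem : θ (m, 1) - θ (m, 2) ≤ x ∧ x < θ (m, 1) + θ (m, 2) := by
    by_contra h
    exact hun (by rw [unifPdf, if_neg h])
  obtain ⟨h1, h2, -, h4⟩ := hbnd m
  exact ⟨by linarith [hmem.1], by linarith [hmem.2]⟩

lemma countIn_mono {Ω : Type*} (X : ℕ → Ω → ℝ) (ω : Ω) (n : ℕ) {V W : Set ℝ}
    (h : V ⊆ W) : countIn X ω n V ≤ countIn X ω n W :=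
  Finset.card_le_card (Finset.monotone_filter_right _ fun i _ hi => h hi)

lemma prob_count_ge {Ω : Type*} [MeasurableSpace Ω] (P : Measure Ω)
    (X : ℕ → Ω → ℝ) (hX : ∀ i, Measurable (X i))
    (hindep : iIndepFun X P)
    (μ₀ : Measure ℝ) (hlaw : ∀ i, Measure.map (X i) P = μ₀)
    (n : ℕ) (V : Set ℝ) (hV : MeasurableSet V) :
    P {ω | 7 ≤ countIn X ω n V} ≤ (n.choose 7) * (μ₀ V)^7 := by
  have hsub : {ω | 7 ≤ countIn X ω n V} ⊆
      ⋃ s ∈ (Finset.range n).powersetCard 7, ⋂ i ∈ s, X i ⁻¹' V := by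
    intro ω hω
    obtain ⟨s, hs, hcard⟩ := Finset.exists_subset_card_eq hω
    have hs' : s ⊆ Finset.range n := hs.trans (Finset.filter_subset _ _)
    refine Set.mem_biUnion (Finset.mem_powersetCard.mpr ⟨hs', hcard⟩) ?_
    refine Set.mem_iInter₂.mpr fun i hi => ?_
    exact (Finset.mem_filter.mp (hs hi)).2
  calc P {ω | 7 ≤ countIn X ω n V}
      ≤ ∑ s ∈ (Finset.range n).powersetCard 7, P (⋂ i ∈ s, X i ⁻¹' V) :=
        le_trans (measure_mono hsub) (measure_biUnion_finset_le _ _)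
    _ = ∑ s ∈ (Finset.range n).powersetCard 7, (μ₀ V)^7 := by
        refine Finset.sum_congr rfl fun s hs => ?_
        rw [hindep.meas_biInter fun i _ => ⟨V, hV, rfl⟩]
        have : ∀ i ∈ s, P (X i ⁻¹' V) = μ₀ V := fun i _ => by
          rw [← Measure.map_apply (hX i) hV, hlaw i]
        rw [Finset.prod_congr rfl this, Finset.prod_const,
          (Finset.mem_powersetCard.mp hs).2]
    _ = (n.choose 7) * (μ₀ V)^7 := by
        rw [Finset.sum_const, Finset.card_powersetCard, Finset.card_range, nsmul_eq_mul]

lemma summable_aux : Summable (fun n : ℕ => (n:ℝ)^7 * Real.exp (-(6 * (n:ℝ) ^ ((1:ℝ)/4)))) := by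
  have key : ∀ n : ℕ, (n:ℝ)^7 * Real.exp (-(6 * (n:ℝ) ^ ((1:ℝ)/4)))
      ≤ ((Nat.factorial 36 : ℝ) / 6^36) * (1/(n:ℝ)^2) := by
    intro n
    rcases Nat.eq_zero_or_pos n with hn | hn
    · subst hn; simp
    have hn0 : (0:ℝ) < n := by exact_mod_cast hn
    set s : ℝ := (n:ℝ) ^ ((1:ℝ)/4) with hs
    have hspos : 0 < s := Real.rpow_pos_of_pos hn0 _
    have hexp : (6*s)^36 / (Nat.factorial 36 : ℝ) ≤ Real.exp (6*s) :=
      Real.pow_div_factorial_le_exp (x := 6*s) (by positivity) 36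
    have hs36 : s^36 = (n:ℝ)^9 := by
      rw [hs, ← Real.rpow_natCast ((n:ℝ) ^ ((1:ℝ)/4)) 36, ← Real.rpow_mul hn0.le]
      norm_num
    have hexp' : Real.exp (-(6*s)) ≤ (Nat.factorial 36 : ℝ) / (6^36 * (n:ℝ)^9) := by
      rw [Real.exp_neg, inv_le_comm₀ (Real.exp_pos _) (by positivity), inv_div]
      calc (6^36 * (n:ℝ)^9) / (Nat.factorial 36 : ℝ)
          = (6*s)^36 / (Nat.factorial 36 : ℝ) := by rw [mul_pow, hs36]
        _ ≤ Real.exp (6*s) := hexp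
    calc (n:ℝ)^7 * Real.exp (-(6*s))
        ≤ (n:ℝ)^7 * ((Nat.factorial 36 : ℝ) / (6^36 * (n:ℝ)^9)) :=
          mul_le_mul_of_nonneg_left hexp' (by positivity)
      _ = ((Nat.factorial 36 : ℝ)/6^36) * (1/(n:ℝ)^2) := by
          field_simp
  exact Summable.of_nonneg_of_le (fun n => by positivity) key
    ((Real.summable_one_div_nat_pow.mpr (by norm_num)).mul_left _)

lemma mixPdf_le_bound {M : ℕ} {Lmin Lmax L c₀ cn : ℝ}
    {θ : EuclideanSpace ℝ (Fin M × Fin 3)} (hcn : 0 < cn)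
    (hθ : θ ∈ thetaN' M Lmin Lmax L c₀ cn) (x : ℝ) :
    mixPdf M θ x ≤ 1 / (2 * cn) := by
  obtain ⟨⟨hα, hsum, hb⟩, hbnd, -⟩ := hθ
  calc mixPdf M θ x ≤ ∑ m : Fin M, θ (m,0) * (1/(2*cn)) := by
        apply Finset.sum_le_sum; intro m _
        apply mul_le_mul_of_nonneg_left _ (hα m)
        have hbm : cn ≤ θ (m,2) := (hbnd m).2.2.1
        unfold unifPdf; split
        · rw [one_div, one_div]
          apply inv_anti₀ (by positivity)
          linarith
        · positivity
    _ = 1/(2*cn) := by rw [← Finset.sum_mul, hsum, one_mul]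

lemma good_event {Ω : Type*} [MeasurableSpace Ω] (P : Measure Ω) [IsProbabilityMeasure P]
    (X : ℕ → Ω → ℝ) (hX : ∀ i, Measurable (X i))
    (hindep : iIndepFun X P)
    (μ₀ : Measure ℝ) (hlaw : ∀ i, Measure.map (X i) P = μ₀)
    (u : ℝ) (hu : 0 ≤ u)
    (hμu : ∀ a b : ℝ, μ₀ (Set.Ico a b) ≤ ENNReal.ofReal (u * (b - a)))
    (A B c₀ : ℝ) (hAB : A < B) (hc₀ : 0 < c₀) :
    ∀ᵐ ω ∂P, ∀ᶠ n : ℕ in atTop, ∀ l r : ℝ, A ≤ l → r ≤ B →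
      r - l ≤ 2 * c₀ * Real.exp (-(n:ℝ) ^ ((1:ℝ)/4)) →
      countIn X ω n (Set.Ico l r) ≤ 6 := by
  have hBA : (0:ℝ) ≤ B - A := by linarith
  have h4uc : (0:ℝ) ≤ 4*u*c₀ := by
    have := hc₀.le; nlinarith
  set C : ℝ := ((B-A)/(2*c₀) + 2) * (4*u*c₀)^7 with hC
  have hCnn : 0 ≤ C := by
    apply mul_nonneg
    · have : (0:ℝ) ≤ (B-A)/(2*c₀) := div_nonneg hBA (by positivity)
      linarith
    · exact pow_nonneg h4uc 7
  set ε : ℕ → ℝ := fun n => 2 * c₀ * Real.exp (-(n:ℝ) ^ ((1:ℝ)/4)) with hε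
  have hεpos : ∀ n, 0 < ε n := fun n => by positivity
  set N : ℕ → ℕ := fun n => ⌈(B - A) / ε n⌉₊ with hN
  set bad : ℕ → Set Ω := fun n =>
    ⋃ j ∈ Finset.range (N n + 1),
      {ω | 7 ≤ countIn X ω n (Set.Ico (A + (j:ℝ) * ε n) (A + (j:ℝ) * ε n + 2 * ε n))} with hbad
  have hbound : ∀ n, P (bad n) ≤ ENNReal.ofReal
      (C * ((n:ℝ)^7 * Real.exp (-(6 * (n:ℝ) ^ ((1:ℝ)/4))))) := by
    intro n
    set s : ℝ := (n:ℝ) ^ ((1:ℝ)/4) with hs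
    have hsnn : 0 ≤ s := Real.rpow_nonneg (Nat.cast_nonneg n) _
    have hq : ∀ j : ℕ,
        μ₀ (Set.Ico (A + (j:ℝ) * ε n) (A + (j:ℝ) * ε n + 2 * ε n))
          ≤ ENNReal.ofReal (u * (2 * ε n)) := fun j =>
      (hμu _ _).trans (le_of_eq (congrArg ENNReal.ofReal (by ring)))
    have step1 : P (bad n) ≤ (↑(N n + 1) : ℝ≥0∞) *
        ((n.choose 7 : ℝ≥0∞) * (ENNReal.ofReal (u * (2 * ε n)))^7) := by
      calc P (bad n) ≤ ∑ j ∈ Finset.range (N n + 1),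
            P {ω | 7 ≤ countIn X ω n
              (Set.Ico (A + (j:ℝ) * ε n) (A + (j:ℝ) * ε n + 2 * ε n))} :=
            measure_biUnion_finset_le _ _
        _ ≤ ∑ _j ∈ Finset.range (N n + 1),
              ((n.choose 7 : ℝ≥0∞) * (ENNReal.ofReal (u * (2 * ε n)))^7) := by
            refine Finset.sum_le_sum fun j _ => ?_
            refine (prob_count_ge P X hX hindep μ₀ hlaw n _ measurableSet_Ico).trans ?_
            gcongr
            exact hq j
        _ = (↑(N n + 1) : ℝ≥0∞) *
              ((n.choose 7 : ℝ≥0∞) * (ENNReal.ofReal (u * (2 * ε n)))^7) := by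
            rw [Finset.sum_const, Finset.card_range, nsmul_eq_mul]
    refine step1.trans ?_
    have hb1 : (↑(N n + 1) : ℝ≥0∞)
        ≤ ENNReal.ofReal (((B-A)/(2*c₀) + 2) * Real.exp s) := by
      rw [← ENNReal.ofReal_natCast]
      apply ENNReal.ofReal_le_ofReal
      push_cast
      have hceil : (N n : ℝ) < (B - A) / ε n + 1 :=
        Nat.ceil_lt_add_one (div_nonneg hBA (hεpos n).le)
      have hdiv : (B - A) / ε n = (B-A)/(2*c₀) * Real.exp s := by
        rw [hε]
        simp only [Real.exp_neg]
        rw [← hs]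
        field_simp
      have hexp1 : 1 ≤ Real.exp s := Real.one_le_exp hsnn
      rw [hdiv] at hceil
      have h1 : (0:ℝ) ≤ (B-A)/(2*c₀) := div_nonneg hBA (by positivity)
      nlinarith
    have hb2 : ((n.choose 7 : ℕ) : ℝ≥0∞) ≤ ENNReal.ofReal ((n:ℝ)^7) := by
      rw [← ENNReal.ofReal_natCast]
      apply ENNReal.ofReal_le_ofReal
      exact_mod_cast Nat.choose_le_pow n 7
    have hb3 : (ENNReal.ofReal (u * (2 * ε n)))^7
        = ENNReal.ofReal ((u * (2 * ε n))^7) :=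
      (ENNReal.ofReal_pow (by positivity) 7).symm
    calc (↑(N n + 1) : ℝ≥0∞) *
          ((n.choose 7 : ℝ≥0∞) * (ENNReal.ofReal (u * (2 * ε n)))^7)
        ≤ ENNReal.ofReal (((B-A)/(2*c₀) + 2) * Real.exp s) *
            (ENNReal.ofReal ((n:ℝ)^7) * ENNReal.ofReal ((u * (2 * ε n))^7)) := by
          rw [hb3]; gcongr
      _ = ENNReal.ofReal ((((B-A)/(2*c₀) + 2) * Real.exp s) *
            ((n:ℝ)^7 * (u * (2 * ε n))^7)) := by
          have hpos2 : (0:ℝ) ≤ ((B-A)/(2*c₀) + 2) * Real.exp s := by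
            have h1 : (0:ℝ) ≤ (B-A)/(2*c₀) := div_nonneg hBA (by positivity)
            nlinarith [Real.exp_pos s]
          rw [ENNReal.ofReal_mul hpos2, ENNReal.ofReal_mul (by positivity : (0:ℝ) ≤ ((n:ℝ)^7))]
      _ ≤ ENNReal.ofReal (C * ((n:ℝ)^7 * Real.exp (-(6 * s)))) := by
          apply ENNReal.ofReal_le_ofReal
          apply le_of_eq
          have hu2 : u * (2 * ε n) = (4*u*c₀) * Real.exp (-s) := by
            rw [hε]; ring
          rw [hu2, mul_pow, ← Real.exp_nat_mul, hC]
          have hES : Real.exp s * Real.exp ((7:ℕ) * -s) = Real.exp (-(6*s)) := by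
            rw [← Real.exp_add]; congr 1; push_cast; ring
          linear_combination ((B-A)/(2*c₀)+2) * (4*u*c₀)^7 * ((n:ℝ)^7) * hES
  have hsumfin : (∑' n, P (bad n)) ≠ ⊤ := by
    have h1 : (∑' n, P (bad n)) ≤ ∑' n : ℕ, ENNReal.ofReal
        (C * ((n:ℝ)^7 * Real.exp (-(6 * (n:ℝ) ^ ((1:ℝ)/4))))) :=
      ENNReal.tsum_le_tsum hbound
    rw [← ENNReal.ofReal_tsum_of_nonneg
      (fun n => mul_nonneg hCnn (by positivity)) (summable_aux.mul_left C)] at h1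
    exact ne_top_of_le_ne_top ENNReal.ofReal_ne_top h1
  filter_upwards [MeasureTheory.ae_eventually_notMem hsumfin] with ω hω
  filter_upwards [hω] with n hn
  intro l r hl hr hlen
  have hlen' : r - l ≤ ε n := hlen
  rcases le_or_gt r l with hrl | hrl
  · simp [countIn, Set.Ico_eq_empty (not_lt.mpr hrl)]
  · set j : ℕ := ⌊(l - A) / ε n⌋₊ with hj
    have hlA : 0 ≤ l - A := by linarith
    have hjle : (j:ℝ) * ε n ≤ l - A := by
      rw [hj]
      calc (⌊(l - A) / ε n⌋₊ : ℝ) * ε n ≤ ((l - A) / ε n) * ε n := by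
            gcongr
            exact Nat.floor_le (div_nonneg hlA (hεpos n).le)
        _ = l - A := div_mul_cancel₀ _ (hεpos n).ne'
    have hjlt : l - A < ((j:ℝ) + 1) * ε n := by
      have := Nat.lt_floor_add_one ((l - A) / ε n)
      calc l - A = ((l - A) / ε n) * ε n := (div_mul_cancel₀ _ (hεpos n).ne').symm
        _ < ((j:ℝ) + 1) * ε n := by
            apply mul_lt_mul_of_pos_right _ (hεpos n)
            exact this
    have hjN : j < N n + 1 := by
      have h1 : j ≤ N n := by
        rw [hj, hN]
        refine le_trans (Nat.floor_le_floor ?_) (Nat.floor_le_ceil _)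
        exact (div_le_div_iff_of_pos_right (hεpos n)).mpr (by linarith)
      omega
    have hsub : Set.Ico l r ⊆
        Set.Ico (A + (j:ℝ) * ε n) (A + (j:ℝ) * ε n + 2 * ε n) := by
      apply Set.Ico_subset_Ico
      · linarith
      · linarith
    have hnot : ¬ (7 ≤ countIn X ω n
        (Set.Ico (A + (j:ℝ) * ε n) (A + (j:ℝ) * ε n + 2 * ε n))) := by
      intro h7
      exact hn (Set.mem_biUnion (Finset.mem_range.mpr hjN) h7)
    have := countIn_mono X ω n hsub
    omega

set_option maxHeartbeats 2000000 in
/-- **Lemma (high intervals).** For fixed `K`, `T ≤ 2M` and `1 ≤ τ ≤ T`, almost surely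
`limsup_n sup_{θ ∈ Θ'_{n,K,T,τ}} [Σ_{t=τ+1}^T (1/n) R_n(J_t(θ)) log H(J_t(θ))
  − 3 Σ_{t=τ+1}^T (2/n) log H(J_t(θ))] ≤ 0`. -/
theorem limsup_sup_high_intervals_le_zero
    (M K T τ : ℕ) (hM : 0 < M) (hK1 : 1 ≤ K) (hKM : K ≤ M)
    (hT1 : 1 ≤ T) (hT2M : T ≤ 2 * M) (hτ1 : 1 ≤ τ) (hτT : τ ≤ T)
    (θ₀ : EuclideanSpace ℝ (Fin M × Fin 3)) (hθ₀ : θ₀ ∈ mixParams M)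
    (Lmin Lmax L : ℝ)
    (hLmin : IsLeast (Set.range fun m : Fin M => θ₀ (m, 1) - θ₀ (m, 2)) Lmin)
    (hLmax : IsGreatest (Set.range fun m : Fin M => θ₀ (m, 1) + θ₀ (m, 2)) Lmax)
    (hL : L = Lmax - Lmin)
    (u : ℝ) (hu : IsGreatest (Set.range (mixPdf M θ₀)) u)
    (c₀ d : ℝ) (hc₀ : 0 < c₀) (hc₀e : 2 * c₀ < Real.exp (-1))
    (hd0 : 1 / 4 < d) (hd1 : d < 1)
    {Ω : Type*} [MeasurableSpace Ω] (P : Measure Ω) [IsProbabilityMeasure P]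
    (X : ℕ → Ω → ℝ) (hX : ∀ i, Measurable (X i))
    (hindep : iIndepFun X P)
    (hlaw : ∀ i, Measure.map (X i) P
      = volume.withDensity fun x => ENNReal.ofReal (mixPdf M θ₀ x)) :
    ∀ᵐ ω ∂P,
      Filter.limsup (fun n : ℕ =>
          sSup {y : ℝ |
            ∃ θ ∈ thetaNK M Lmin Lmax L c₀ (c₀ * Real.exp (-(n : ℝ) ^ d)) K,
            ∃ D : StepDecomp M θ T,
              tauEq D (c₀ * Real.exp (-(n : ℝ) ^ ((1 : ℝ) / 4))) τ ∧
              y = (∑ t ∈ Finset.univ.filter (fun t : Fin T => τ ≤ (t : ℕ)),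
                    (countIn X ω n (Set.Ico (D.l t) (D.r t)) : ℝ) / n
                      * Real.log (D.H t))
                - 3 * ∑ t ∈ Finset.univ.filter (fun t : Fin T => τ ≤ (t : ℕ)),
                    (2 / (n : ℝ)) * Real.log (D.H t)})
        atTop
      ≤ 0 := by
  -- basic positivity facts
  obtain ⟨m₁, hm₁⟩ := hLmin.1
  have hb₁ : 0 < θ₀ (m₁, 2) := hθ₀.2.2 m₁
  have hmax₁ : θ₀ (m₁, 1) + θ₀ (m₁, 2) ≤ Lmax := hLmax.2 (Set.mem_range_self m₁)
  have hm₁' : θ₀ (m₁, 1) - θ₀ (m₁, 2) = Lmin := hm₁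
  have hLpos : 0 < L := by rw [hL]; linarith [hm₁'.le, hm₁'.ge]
  have hAB : Lmin - L < Lmax + L := by linarith
  obtain ⟨x₀, hx₀⟩ := hu.1
  have hu0 : 0 ≤ u := hx₀ ▸ mixPdf_nonneg hθ₀ x₀
  set μ₀ : Measure ℝ := volume.withDensity fun x => ENNReal.ofReal (mixPdf M θ₀ x) with hμ₀
  have hμu : ∀ a b : ℝ, μ₀ (Set.Ico a b) ≤ ENNReal.ofReal (u * (b - a)) := by
    intro a b
    rw [hμ₀, withDensity_apply _ measurableSet_Ico]
    calc ∫⁻ x in Set.Ico a b, ENNReal.ofReal (mixPdf M θ₀ x)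
        ≤ ∫⁻ _x in Set.Ico a b, ENNReal.ofReal u :=
          lintegral_mono fun x => ENNReal.ofReal_le_ofReal (hu.2 (Set.mem_range_self x))
      _ = ENNReal.ofReal u * volume (Set.Ico a b) := setLIntegral_const _ _
      _ = ENNReal.ofReal u * ENNReal.ofReal (b - a) := by rw [Real.volume_Ico]
      _ = ENNReal.ofReal (u * (b - a)) := (ENNReal.ofReal_mul hu0).symm
  filter_upwards [good_event P X hX hindep μ₀ (fun i => hlaw i) u hu0 hμu
    (Lmin - L) (Lmax + L) c₀ hAB hc₀] with ω hgood
  set Cr : ℝ := 6 * T * (1 + Real.log (1/(2*c₀))) with hCr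
  have hexpneg1 : Real.exp (-1 : ℝ) < 1 := by
    rw [Real.exp_lt_one_iff]; norm_num
  have hC₀ : 0 ≤ Real.log (1/(2*c₀)) := by
    apply Real.log_nonneg
    rw [le_div_iff₀ (by positivity)]
    nlinarith
  have hCrnn : 0 ≤ Cr := by
    rw [hCr]; positivity
  have hev : ∀ᶠ n : ℕ in atTop,
      sSup {y : ℝ |
        ∃ θ ∈ thetaNK M Lmin Lmax L c₀ (c₀ * Real.exp (-(n : ℝ) ^ d)) K,
        ∃ D : StepDecomp M θ T,
          tauEq D (c₀ * Real.exp (-(n : ℝ) ^ ((1 : ℝ) / 4))) τ ∧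
          y = (∑ t ∈ Finset.univ.filter (fun t : Fin T => τ ≤ (t : ℕ)),
                (countIn X ω n (Set.Ico (D.l t) (D.r t)) : ℝ) / n
                  * Real.log (D.H t))
            - 3 * ∑ t ∈ Finset.univ.filter (fun t : Fin T => τ ≤ (t : ℕ)),
                (2 / (n : ℝ)) * Real.log (D.H t)} ≤ 0 ∧
      -Cr ≤ sSup {y : ℝ |
        ∃ θ ∈ thetaNK M Lmin Lmax L c₀ (c₀ * Real.exp (-(n : ℝ) ^ d)) K,
        ∃ D : StepDecomp M θ T,
          tauEq D (c₀ * Real.exp (-(n : ℝ) ^ ((1 : ℝ) / 4))) τ ∧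
          y = (∑ t ∈ Finset.univ.filter (fun t : Fin T => τ ≤ (t : ℕ)),
                (countIn X ω n (Set.Ico (D.l t) (D.r t)) : ℝ) / n
                  * Real.log (D.H t))
            - 3 * ∑ t ∈ Finset.univ.filter (fun t : Fin T => τ ≤ (t : ℕ)),
                (2 / (n : ℝ)) * Real.log (D.H t)} := by
    filter_upwards [hgood, eventually_ge_atTop 1] with n hg hn1
    have hn0 : (0:ℝ) < n := by exact_mod_cast hn1
    have hn1' : (1:ℝ) ≤ n := by exact_mod_cast hn1
    set S := {y : ℝ |
        ∃ θ ∈ thetaNK M Lmin Lmax L c₀ (c₀ * Real.exp (-(n : ℝ) ^ d)) K,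
        ∃ D : StepDecomp M θ T,
          tauEq D (c₀ * Real.exp (-(n : ℝ) ^ ((1 : ℝ) / 4))) τ ∧
          y = (∑ t ∈ Finset.univ.filter (fun t : Fin T => τ ≤ (t : ℕ)),
                (countIn X ω n (Set.Ico (D.l t) (D.r t)) : ℝ) / n
                  * Real.log (D.H t))
            - 3 * ∑ t ∈ Finset.univ.filter (fun t : Fin T => τ ≤ (t : ℕ)),
                (2 / (n : ℝ)) * Real.log (D.H t)} with hS
    have hboth : ∀ y ∈ S, y ≤ 0 ∧ -Cr ≤ y := by
      rintro y ⟨θ, hθ, D, htau, rfl⟩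
      have hθ' : θ ∈ thetaN' M Lmin Lmax L c₀ (c₀ * Real.exp (-(n : ℝ) ^ d)) := hθ.1
      have hθm : θ ∈ mixParams M := hθ'.1
      set cn' : ℝ := c₀ * Real.exp (-(n:ℝ) ^ ((1:ℝ)/4)) with hcn'
      have hcn'pos : 0 < cn' := by positivity
      have hM1 : (1:ℝ) ≤ M := by exact_mod_cast hM
      have hsnn : (0:ℝ) ≤ (n:ℝ) ^ ((1:ℝ)/4) := Real.rpow_nonneg (Nat.cast_nonneg n) _
      have hexple : Real.exp (-(n:ℝ) ^ ((1:ℝ)/4)) ≤ 1 :=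
        Real.exp_le_one_iff.mpr (by linarith)
      have h2cn1 : 2*cn' < 1 := by
        rw [hcn']
        nlinarith [Real.exp_pos (-(n:ℝ) ^ ((1:ℝ)/4))]
      -- per-t facts on the filtered set
      have hlogpos : ∀ t ∈ Finset.univ.filter (fun t : Fin T => τ ≤ (t : ℕ)),
          0 ≤ Real.log (D.H t) := by
        intro t ht
        have hτt : τ ≤ (t:ℕ) := (Finset.mem_filter.mp ht).2
        have hHgt : (M:ℝ) / (2*cn') < D.H t :=
          lt_of_not_ge fun hle => (not_lt.mpr hτt) ((htau t).mp hle)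
        have hH1 : 1 < D.H t := by
          refine lt_of_le_of_lt ?_ hHgt
          rw [le_div_iff₀ (by positivity)]
          nlinarith
        exact Real.log_nonneg hH1.le
      have hterm : ∀ t ∈ Finset.univ.filter (fun t : Fin T => τ ≤ (t : ℕ)),
          (countIn X ω n (Set.Ico (D.l t) (D.r t)) : ℝ) / n * Real.log (D.H t)
            ≤ 3 * (2 / (n:ℝ) * Real.log (D.H t)) := by
        intro t ht
        have hτt : τ ≤ (t:ℕ) := (Finset.mem_filter.mp ht).2
        have hHgt : (M:ℝ) / (2*cn') < D.H t :=
          lt_of_not_ge fun hle => (not_lt.mpr hτt) ((htau t).mp hle)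
        have hHpos := D.Hpos t
        have hlog := hlogpos t ht
        have hlen : D.r t - D.l t ≤ 2 * c₀ * Real.exp (-(n:ℝ) ^ ((1:ℝ)/4)) := by
          have h1 : D.H t * (D.r t - D.l t) ≤ 1 := D.height_mul_length_le_one hθm t
          have hMpos : (0:ℝ) < M := by linarith
          have h2 : D.r t - D.l t ≤ 1 / D.H t := by
            rw [le_div_iff₀ hHpos]; nlinarith
          have h3 : 1 / D.H t ≤ 2*cn' / M := by
            rw [div_le_div_iff₀ hHpos hMpos]
            rw [div_lt_iff₀ (by positivity)] at hHgt
            nlinarith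
          have h4 : 2*cn'/M ≤ 2*cn' := div_le_self (by positivity) hM1
          calc D.r t - D.l t ≤ 1 / D.H t := h2
            _ ≤ 2*cn'/M := h3
            _ ≤ 2*cn' := h4
            _ = 2 * c₀ * Real.exp (-(n:ℝ) ^ ((1:ℝ)/4)) := by rw [hcn']; ring
        have hJb : ∀ x ∈ Set.Ico (D.l t) (D.r t), Lmin - L ≤ x ∧ x < Lmax + L := by
          intro x hx
          apply mem_support_bounds hθ'
          rw [D.value_eq t hx]; exact hHpos
        have hlb : Lmin - L ≤ D.l t :=
          (hJb _ (Set.mem_Ico.mpr ⟨le_refl _, D.lt t⟩)).1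
        have hrb : D.r t ≤ Lmax + L := by
          by_contra hcon
          push_neg at hcon
          have hx : max (D.l t) (Lmax + L) ∈ Set.Ico (D.l t) (D.r t) :=
            ⟨le_max_left _ _, max_lt (D.lt t) hcon⟩
          have h5 := (hJb _ hx).2
          have h6 := le_max_right (D.l t) (Lmax + L)
          linarith
        have hcount : countIn X ω n (Set.Ico (D.l t) (D.r t)) ≤ 6 := hg _ _ hlb hrb hlen
        have hdivle : (countIn X ω n (Set.Ico (D.l t) (D.r t)) : ℝ) / n ≤ 6 / n := by
          gcongr
          exact_mod_cast hcount
        calc (countIn X ω n (Set.Ico (D.l t) (D.r t)) : ℝ) / n * Real.log (D.H t)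
            ≤ 6 / n * Real.log (D.H t) := mul_le_mul_of_nonneg_right hdivle hlog
          _ = 3 * (2 / (n:ℝ) * Real.log (D.H t)) := by ring
      have hlogub : ∀ t ∈ Finset.univ.filter (fun t : Fin T => τ ≤ (t : ℕ)),
          Real.log (D.H t) ≤ (n:ℝ)^d + Real.log (1/(2*c₀)) := by
        intro t _
        have hx : D.l t ∈ Set.Ico (D.l t) (D.r t) := ⟨le_rfl, D.lt t⟩
        have h1 : D.H t ≤ 1/(2*(c₀ * Real.exp (-(n:ℝ)^d))) := by
          rw [← D.value_eq t hx]
          exact mixPdf_le_bound (by positivity) hθ' _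
        have h2 : Real.log (D.H t) ≤ Real.log (1/(2*(c₀ * Real.exp (-(n:ℝ)^d)))) :=
          (Real.log_le_log_iff (D.Hpos t) (by positivity)).mpr h1
        refine h2.trans (le_of_eq ?_)
        rw [one_div, Real.log_inv, one_div, Real.log_inv,
          show 2*(c₀ * Real.exp (-(n:ℝ)^d)) = (2*c₀) * Real.exp (-(n:ℝ)^d) by ring,
          Real.log_mul (by positivity) (Real.exp_ne_zero _), Real.log_exp]
        ring
      -- upper bound
      constructor
      · rw [sub_nonpos, Finset.mul_sum]
        exact Finset.sum_le_sum hterm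
      · -- lower bound
        have hS1 : 0 ≤ ∑ t ∈ Finset.univ.filter (fun t : Fin T => τ ≤ (t : ℕ)),
            (countIn X ω n (Set.Ico (D.l t) (D.r t)) : ℝ) / n * Real.log (D.H t) :=
          Finset.sum_nonneg fun t ht => mul_nonneg (by positivity) (hlogpos t ht)
        have hnd : (n:ℝ)^d ≤ n := by
          calc (n:ℝ)^d ≤ (n:ℝ)^(1:ℝ) :=
                Real.rpow_le_rpow_of_exponent_le hn1' hd1.le
            _ = n := Real.rpow_one _
        have hcard : ((Finset.univ.filter (fun t : Fin T => τ ≤ (t : ℕ))).card : ℝ) ≤ T := by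
          have := Finset.card_filter_le (Finset.univ : Finset (Fin T))
            (fun t : Fin T => τ ≤ (t : ℕ))
          simp only [Finset.card_univ, Fintype.card_fin] at this
          exact_mod_cast this
        have hsumlog : ∑ t ∈ Finset.univ.filter (fun t : Fin T => τ ≤ (t : ℕ)),
            Real.log (D.H t) ≤ (T:ℝ) * ((n:ℝ)^d + Real.log (1/(2*c₀))) := by
          calc ∑ t ∈ Finset.univ.filter (fun t : Fin T => τ ≤ (t : ℕ)), Real.log (D.H t)
              ≤ (Finset.univ.filter (fun t : Fin T => τ ≤ (t : ℕ))).card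
                  • ((n:ℝ)^d + Real.log (1/(2*c₀))) :=
                Finset.sum_le_card_nsmul _ _ _ hlogub
            _ = ((Finset.univ.filter (fun t : Fin T => τ ≤ (t : ℕ))).card : ℝ)
                  * ((n:ℝ)^d + Real.log (1/(2*c₀))) := nsmul_eq_mul _ _
            _ ≤ (T:ℝ) * ((n:ℝ)^d + Real.log (1/(2*c₀))) := by
                apply mul_le_mul_of_nonneg_right hcard
                have : (0:ℝ) ≤ (n:ℝ)^d := Real.rpow_nonneg (Nat.cast_nonneg n) _
                linarith
        have hS2 : ∑ t ∈ Finset.univ.filter (fun t : Fin T => τ ≤ (t : ℕ)),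
            (2 / (n:ℝ)) * Real.log (D.H t) ≤ 2 * T * (1 + Real.log (1/(2*c₀))) := by
          rw [← Finset.mul_sum]
          calc (2 / (n:ℝ)) * ∑ t ∈ Finset.univ.filter (fun t : Fin T => τ ≤ (t : ℕ)),
                Real.log (D.H t)
              ≤ (2 / (n:ℝ)) * ((T:ℝ) * ((n:ℝ)^d + Real.log (1/(2*c₀)))) := by
                apply mul_le_mul_of_nonneg_left hsumlog (by positivity)
            _ ≤ 2 * T * (1 + Real.log (1/(2*c₀))) := by
                rw [div_mul_eq_mul_div, div_le_iff₀ hn0]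
                have hCn : Real.log (1/(2*c₀)) ≤ Real.log (1/(2*c₀)) * n :=
                  le_mul_of_one_le_right hC₀ hn1'
                nlinarith [mul_le_mul_of_nonneg_left (add_le_add hnd hCn)
                  (by positivity : (0:ℝ) ≤ (T:ℝ))]
        rw [hCr]
        nlinarith [hS1, hS2]
    constructor
    · exact Real.sSup_le (fun y hy => (hboth y hy).1) le_rfl
    · rcases Set.eq_empty_or_nonempty S with hSe | ⟨y, hy⟩
      · rw [hSe, Real.sSup_empty]; linarith
      · exact le_trans (hboth y hy).2
          (le_csSup ⟨0, fun z hz => (hboth z hz).1⟩ hy)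
  exact Filter.limsup_le_of_le
    (Filter.isCoboundedUnder_le_of_eventually_le atTop (hev.mono fun n h => h.2))
    (hev.mono fun n h => h.1)
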